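/- arXiv:2604.01107 — 2 statements merged into one kernel-verified Lean document; each statement's English description precedes it below -/
import Mathlib

section
/- Let F be a free group and let φ, ψ be endomorphisms of F, neither of which is injective. Then the intersection of the kernels of φ and ψ is nontrivial. -/
open Subgroup

/-- In a free group, distinct generators do not commute. -/
private lemma freeGroup_of_not_commute {β : Type*} {a b : β} (hab : a ≠ b) :
    ¬ Commute (FreeGroup.of a) (FreeGroup.of b) := by
  classical
  intro h
  have := h.map (FreeGroup.lift
    (fun x => if x = a then Equiv.swap (0 : Fin 3) 1 else Equiv.swap 1 2))
  simp only [Commute, SemiconjBy, FreeGroup.lift_apply_of, if_pos rfl, if_neg (Ne.symm hab)] at this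
  exact absurd (congrFun (congrArg Equiv.toFun this) 0) (by decide)

/-- A commutative free group has a subsingleton generating type. -/
private lemma subsingleton_of_comm {β : Type*}
    (h : ∀ x y : FreeGroup β, Commute x y) : Subsingleton β := by
  refine ⟨fun a b => ?_⟩
  by_contra hab
  exact freeGroup_of_not_commute hab (h _ _)

private lemma freeGroup_eq_one_of_isEmpty {β : Type*} [IsEmpty β] (x : FreeGroup β) :
    x = 1 := by
  rw [← FreeGroup.toWord_eq_nil_iff]
  rcases h : x.toWord with _ | ⟨⟨a, _⟩, _⟩
  · rfl
  · exact (IsEmpty.false a).elim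

private lemma freeGroupUnit_pow_eq_one {k : ℤ} (h : FreeGroup.of () ^ k = 1) : k = 0 := by
  have h1 : FreeGroup.of () ^ k = FreeGroup.freeGroupUnitEquivInt.symm k := rfl
  have h2 : FreeGroup.of () ^ (0 : ℤ) = FreeGroup.freeGroupUnitEquivInt.symm 0 := rfl
  rw [h1] at h
  rw [zpow_zero] at h2
  have : FreeGroup.freeGroupUnitEquivInt.symm k = FreeGroup.freeGroupUnitEquivInt.symm 0 := by
    rw [h, h2]
  exact FreeGroup.freeGroupUnitEquivInt.symm.injective this

/-- In a commutative free group, two nontrivial elements have a nontrivial common power. -/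
private lemma common_power {G : Type*} [Group G] [IsFreeGroup G]
    (hcomm : ∀ x y : G, Commute x y) {u v : G} (hu : u ≠ 1) (hv : v ≠ 1) :
    ∃ n m : ℤ, u ^ n = v ^ m ∧ u ^ n ≠ 1 := by
  classical
  set β := IsFreeGroup.Generators G
  let e : G ≃* FreeGroup β := IsFreeGroup.toFreeGroup G
  have hcommβ : ∀ x y : FreeGroup β, Commute x y := by
    intro x y
    have := (hcomm (e.symm x) (e.symm y)).map e.toMonoidHom
    simpa using this
  have hsub : Subsingleton β := subsingleton_of_comm hcommβ
  have hne : Nonempty β := by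
    by_contra hempty
    haveI : IsEmpty β := not_nonempty_iff.mp hempty
    exact hu (e.injective (by rw [map_one]; exact freeGroup_eq_one_of_isEmpty (e u)))
  haveI : Unique β := ⟨⟨hne.some⟩, fun b => Subsingleton.elim _ _⟩
  let c : FreeGroup β ≃* FreeGroup Unit := FreeGroup.freeGroupCongr (Equiv.ofUnique β Unit)
  let E : G ≃* FreeGroup Unit := e.trans c
  set m : ℤ := FreeGroup.freeGroupUnitEquivInt (E u) with hm
  set n : ℤ := FreeGroup.freeGroupUnitEquivInt (E v) with hn
  have hEu : E u = FreeGroup.of () ^ m := (FreeGroup.freeGroupUnitEquivInt.symm_apply_apply (E u)).symm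
  have hEv : E v = FreeGroup.of () ^ n := (FreeGroup.freeGroupUnitEquivInt.symm_apply_apply (E v)).symm
  have hm0 : m ≠ 0 := by
    intro h0
    apply hu
    apply E.injective
    rw [hEu, h0, zpow_zero, map_one]
  have hn0 : n ≠ 0 := by
    intro h0
    apply hv
    apply E.injective
    rw [hEv, h0, zpow_zero, map_one]
  refine ⟨n, m, ?_, ?_⟩
  · apply E.injective
    rw [map_zpow, map_zpow, hEu, hEv, ← zpow_mul, ← zpow_mul, mul_comm]
  · intro h1
    have : FreeGroup.of () ^ (m * n) = 1 := by
      rw [zpow_mul, ← hEu, ← map_zpow, h1, map_one]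
    exact mul_ne_zero hm0 hn0 (freeGroupUnit_pow_eq_one this)

/-- If `φ` and `ψ` are endomorphisms of a nonabelian free group, neither of which is
injective, then `Ker(φ) ∩ Ker(ψ)` is nontrivial. -/
theorem kernels_intersect_nontrivial {α : Type*} [Nontrivial α]
    (φ ψ : FreeGroup α →* FreeGroup α)
    (hφ : ¬ Function.Injective φ) (hψ : ¬ Function.Injective ψ) :
    φ.ker ⊓ ψ.ker ≠ ⊥ := by
  classical
  have hkφ : φ.ker ≠ ⊥ := fun h => hφ ((MonoidHom.ker_eq_bot_iff φ).mp h)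
  have hkψ : ψ.ker ≠ ⊥ := fun h => hψ ((MonoidHom.ker_eq_bot_iff ψ).mp h)
  obtain ⟨⟨u, huk⟩, hu1⟩ := Subgroup.ne_bot_iff_exists_ne_one.mp hkφ
  obtain ⟨⟨v, hvk⟩, hv1⟩ := Subgroup.ne_bot_iff_exists_ne_one.mp hkψ
  have hu : u ≠ 1 := fun h => hu1 (Subtype.ext h)
  have hv : v ≠ 1 := fun h => hv1 (Subtype.ext h)
  -- It suffices to find a nontrivial element of both kernels.
  suffices h : ∃ g : FreeGroup α, g ≠ 1 ∧ g ∈ φ.ker ∧ g ∈ ψ.ker by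
    obtain ⟨g, hg, hg1, hg2⟩ := h
    exact Subgroup.ne_bot_iff_exists_ne_one.mpr
      ⟨⟨g, Subgroup.mem_inf.mpr ⟨hg1, hg2⟩⟩, fun h => hg (congrArg Subtype.val h)⟩
  by_cases hc : Commute u v
  · -- commuting case: take a common power
    set H : Subgroup (FreeGroup α) := Subgroup.closure {u, v} with hH
    have huH : u ∈ H := Subgroup.subset_closure (Set.mem_insert _ _)
    have hvH : v ∈ H := Subgroup.subset_closure (Set.mem_insert_of_mem _ rfl)
    have hcomm : ∀ x y : H, Commute x y := by
      rintro ⟨x, hx⟩ ⟨y, hy⟩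
      have : Commute x y := by
        refine Subgroup.closure_induction₂
          (p := fun a b _ _ => Commute a b) ?_ ?_ ?_ ?_ ?_ ?_ ?_ hx hy
        · rintro a b (rfl | rfl) (rfl | rfl)
          · exact Commute.refl _
          · exact hc
          · exact hc.symm
          · exact Commute.refl _
        · exact fun x hx => Commute.one_left x
        · exact fun x hx => Commute.one_right x
        · exact fun x y z _ _ _ h1 h2 => h1.mul_left h2
        · exact fun y z x _ _ _ h1 h2 => h1.mul_right h2
        · exact fun x y _ _ h => h.inv_left
        · exact fun x y _ _ h => h.inv_right
      exact Subtype.ext (by simpa using this.eq)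
    obtain ⟨n, m, hnm, hne⟩ := common_power hcomm
      (u := ⟨u, huH⟩) (v := ⟨v, hvH⟩)
      (fun h => hu (congrArg Subtype.val h)) (fun h => hv (congrArg Subtype.val h))
    have hnm' : u ^ n = v ^ m := by
      have := congrArg Subtype.val hnm
      simpa using this
    refine ⟨u ^ n, ?_, ?_, ?_⟩
    · intro h
      exact hne (Subtype.ext (by simpa using h))
    · rw [MonoidHom.mem_ker, map_zpow, MonoidHom.mem_ker.mp huk, one_zpow]
    · rw [hnm', MonoidHom.mem_ker, map_zpow, MonoidHom.mem_ker.mp hvk, one_zpow]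
  · -- noncommuting case: take the commutator
    refine ⟨u * v * u⁻¹ * v⁻¹, ?_, ?_, ?_⟩
    · intro h
      exact hc (commutatorElement_eq_one_iff_commute.mp h)
    · rw [MonoidHom.mem_ker]
      simp [MonoidHom.mem_ker.mp huk]
    · rw [MonoidHom.mem_ker]
      simp [MonoidHom.mem_ker.mp hvk]
end

section
/- Let F be a free group with basis A, let B = A ∪ {$} with $ a new symbol, and let φ be an endomorphism of F. Fix u ∈ F and let Φ be the endomorphism of the free group F_B on B extending φ (via the inclusion F ↪ F_B) with Φ($) = u⁻¹·$. Then {v ∈ F | φ(v) = v·u} = {w·$⁻¹ | w ∈ Fix(Φ) ∩ F·$}; equivalently, for v ∈ F, φ(v) = v·u if and only if v·$ ∈ Fix(Φ). -/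
/-- The canonical embedding of `F_A` into `F_B` where `B = A ⊔ {$}`. -/
def incl (A : Type*) : FreeGroup A →* FreeGroup (A ⊕ Unit) :=
  FreeGroup.map Sum.inl

/-- The new symbol `$` of `F_B`. -/
def dollar (A : Type*) : FreeGroup (A ⊕ Unit) := FreeGroup.of (Sum.inr ())

/-- The extension `Φ` of `φ` to `F_B` with `Φ($) = u⁻¹·$`. -/
def bigPhi {A : Type*} (φ : FreeGroup A →* FreeGroup A) (u : FreeGroup A) :
    FreeGroup (A ⊕ Unit) →* FreeGroup (A ⊕ Unit) :=
  FreeGroup.lift (Sum.elim (fun a => incl A (φ (FreeGroup.of a)))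
    (fun _ => (incl A u)⁻¹ * dollar A))

/-- A retraction of `incl`. -/
def retr (A : Type*) : FreeGroup (A ⊕ Unit) →* FreeGroup A :=
  FreeGroup.lift (Sum.elim FreeGroup.of (fun _ => 1))

lemma retr_incl {A : Type*} (v : FreeGroup A) : retr A (incl A v) = v := by
  have : (retr A).comp (incl A) = MonoidHom.id _ := by
    ext a
    simp [retr, incl]
  have h := DFunLike.congr_fun this v
  simpa using h

lemma incl_injective (A : Type*) : Function.Injective (incl A) :=
  Function.LeftInverse.injective retr_incl

lemma bigPhi_incl {A : Type*} (φ : FreeGroup A →* FreeGroup A) (u : FreeGroup A)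
    (v : FreeGroup A) : bigPhi φ u (incl A v) = incl A (φ v) := by
  have : (bigPhi φ u).comp (incl A) = (incl A).comp φ := by
    ext a
    simp [bigPhi, incl]
  exact DFunLike.congr_fun this v

/-- For `v ∈ F_A`, `φ(v) = v·u` if and only if `v·$` is a fixed point of `Φ`. -/
theorem twisted_fix_iff_dollar_fix {A : Type*}
    (φ : FreeGroup A →* FreeGroup A) (u : FreeGroup A) :
    ∀ v : FreeGroup A,
      φ v = v * u ↔
        bigPhi φ u (incl A v * dollar A) = incl A v * dollar A := by
  intro v
  have hd : bigPhi φ u (dollar A) = (incl A u)⁻¹ * dollar A := by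
    simp [bigPhi, dollar]
  rw [map_mul, hd, bigPhi_incl]
  constructor
  · intro h
    rw [h]
    simp [mul_assoc]
  · intro h
    have h2 : incl A (φ v) * (incl A u)⁻¹ = incl A v :=
      mul_right_cancel (b := dollar A) (by rw [mul_assoc]; exact h)
    have h3 : incl A (φ v) = incl A (v * u) := by
      rw [map_mul, ← h2]; group
    exact incl_injective A h3
end
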